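/- Let J be a strongly stable Artinian monomial ideal in R = k[x_1,…,x_n] and 1 ≤ i ≤ n−1. If α = (α_1,…,α_i) ∈ J_i, then the element (0,…,0,|α|) ∈ ℤ_{≥0}^i also belongs to J_i, and moreover f_{i+1}(α_1,…,α_i) ≤ f_{i+1}(0,…,0,|α|). -/
import Mathlib


/-
Combinatorial framework: a monomial ideal in `k[x_1,…,x_n]` is encoded by its set
of monomials, viewed as exponent vectors in `Fin n → ℕ` (with `x_1,…,x_n`
corresponding to indices `0,…,n-1`).
-/

/-- A monomial ideal: a set of exponent vectors closed under multiplication by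
arbitrary monomials. -/
def IsMonomialIdeal {n : ℕ} (S : Set (Fin n → ℕ)) : Prop :=
  ∀ m ∈ S, ∀ m' : Fin n → ℕ, m + m' ∈ S

/-- `R/J` is a finite-dimensional `k`-vector space iff the set of standard
monomials (the complement of the monomial set of `J`) is finite. -/
def IsArtinianMonomialSet {n : ℕ} (S : Set (Fin n → ℕ)) : Prop :=
  Sᶜ.Finite

/-- Strong stability: if `m ∈ J`, `x_j ∣ m` and `i < j`, then `x_i · m / x_j ∈ J`. -/
def IsStronglyStable {n : ℕ} (S : Set (Fin n → ℕ)) : Prop :=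
  ∀ m ∈ S, ∀ i j : Fin n, i < j → 0 < m j →
    (fun l => if l = i then m i + 1 else if l = j then m j - 1 else m l) ∈ S

/-- `x^a < x^b` in the reverse lexicographic order with `x_1 > ⋯ > x_n`
(used to compare monomials of the same degree): at the last index where the
exponents differ, `a` has the larger exponent. -/
def RevLexLT {n : ℕ} (a b : Fin n → ℕ) : Prop :=
  ∃ j : Fin n, b j < a j ∧ ∀ l : Fin n, j < l → a l = b l

/-- Total degree of a monomial. -/
def mdeg {n : ℕ} (m : Fin n → ℕ) : ℕ := ∑ l, m l

/-- `m` is a minimal (monomial) generator of the monomial ideal `S`. -/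
def IsMinGen {n : ℕ} (S : Set (Fin n → ℕ)) (m : Fin n → ℕ) : Prop :=
  m ∈ S ∧ ∀ m' ∈ S, (∀ l, m' l ≤ m l) → m' = m

/-- Almost reverse lexicographic: `S` contains every monomial that is greater in
reverse lexicographic order than some minimal generator of `S` of the same degree. -/
def AlmostRevLex {n : ℕ} (S : Set (Fin n → ℕ)) : Prop :=
  ∀ M N : Fin n → ℕ, IsMinGen S N → mdeg M = mdeg N → RevLexLT N M → M ∈ S

/-- The exponent vector of `x_1^{α 0} ⋯ x_i^{α (i-1)} · x_{i+1}^t`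
(0-based: positions `0,…,i-1` carry `α`, position `i` carries `t`). -/
def monVec (n i : ℕ) (α : ℕ → ℕ) (t : ℕ) : Fin n → ℕ :=
  fun l => if (l : ℕ) < i then α l else if (l : ℕ) = i then t else 0

/-- `fF S i α = min {t : x_1^{α 0}⋯x_i^{α (i-1)} · x_{i+1}^t ∈ S}`; this is the
paper's `f_{i+1}(α_1,…,α_i)` (0-based `i`, so `fF S 0 _` is the paper's `f_1`). -/
noncomputable def fF {n : ℕ} (S : Set (Fin n → ℕ)) (i : ℕ) (α : ℕ → ℕ) : ℕ :=
  sInf {t | monVec n i α t ∈ S}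

/-- The paper's set `J_i`: tuples `(α_1,…,α_i)` (recorded in positions
`0,…,i-1` and padded by zeros) with `α_1 < f_1` and
`α_j < f_j(α_1,…,α_{j-1})` for `2 ≤ j ≤ i`. -/
def JSet {n : ℕ} (S : Set (Fin n → ℕ)) (i : ℕ) : Set (ℕ → ℕ) :=
  {α | (∀ l, i ≤ l → α l = 0) ∧ ∀ j, j < i → α j < fF S j α}

/-- `|α| = α_1 + ⋯ + α_i`. -/
def asum (i : ℕ) (α : ℕ → ℕ) : ℕ := ∑ j ∈ Finset.range i, α j

/-- The tuple `(0,…,0,s)` of length `i`. -/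
def lastVec (i s : ℕ) : ℕ → ℕ := fun l => if l = i - 1 then s else 0

/-- Reverse lexicographic comparison of `i`-tuples: `x^a < x^b`. -/
def RevLexLT' (a b : ℕ → ℕ) : Prop :=
  ∃ j : ℕ, b j < a j ∧ ∀ l, j < l → a l = b l

section Aux

lemma monVec_congr {n i : ℕ} {β γ : ℕ → ℕ} (t : ℕ)
    (h : ∀ l < i, β l = γ l) : monVec n i β t = monVec n i γ t := by
  funext l
  simp only [monVec]
  split_ifs with h1
  · exact h l h1
  · rfl
  · rfl

lemma monVec_up {n : ℕ} {S : Set (Fin n → ℕ)} (hIdeal : IsMonomialIdeal S)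
    {i : ℕ} {β : ℕ → ℕ} {t t' : ℕ} (htt : t ≤ t')
    (h : monVec n i β t ∈ S) : monVec n i β t' ∈ S := by
  have h2 := hIdeal _ h (fun l => if (l : ℕ) = i then t' - t else 0)
  have : monVec n i β t + (fun l : Fin n => if (l : ℕ) = i then t' - t else 0)
      = monVec n i β t' := by
    funext l
    simp only [monVec, Pi.add_apply]
    split_ifs <;> omega
  rwa [this] at h2

lemma fF_nonempty {n : ℕ} {S : Set (Fin n → ℕ)} (hArt : IsArtinianMonomialSet S)
    {i : ℕ} (hi : i < n) (β : ℕ → ℕ) : {t | monVec n i β t ∈ S}.Nonempty := by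
  by_contra h
  rw [Set.not_nonempty_iff_eq_empty] at h
  have hinj : Function.Injective (fun t => monVec n i β t) := by
    intro a b hab
    have := congrFun hab ⟨i, hi⟩
    simpa [monVec] using this
  have hmem : ∀ t : ℕ, monVec n i β t ∈ Sᶜ := by
    intro t
    intro hm
    have : t ∈ {t | monVec n i β t ∈ S} := hm
    simp [h] at this
  exact (Set.infinite_of_injective_forall_mem hinj hmem) hArt

lemma lt_fF {n : ℕ} {S : Set (Fin n → ℕ)} (hIdeal : IsMonomialIdeal S)
    (hArt : IsArtinianMonomialSet S) {i : ℕ} (hi : i < n) {β : ℕ → ℕ} {v : ℕ}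
    (hnot : monVec n i β v ∉ S) : v < fF S i β := by
  by_contra h
  push_neg at h
  have hne := fF_nonempty hArt hi β
  have hmem := Nat.sInf_mem hne
  exact hnot (monVec_up hIdeal h hmem)

/-- Key move lemma: if `x_i^{|β|} x_{i+1}^t ∈ S` then `x^β x_{i+1}^t ∈ S`,
by strong stability (moving exponents from position `i-1` down). -/
lemma moveDown {n : ℕ} {S : Set (Fin n → ℕ)} (hSS : IsStronglyStable S)
    {i : ℕ} (hi1 : 1 ≤ i) (hin : i < n) :
    ∀ (K : ℕ) (β : ℕ → ℕ) (t : ℕ), (∑ j ∈ Finset.range (i - 1), β j ≤ K) →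
      monVec n i (lastVec i (asum i β)) t ∈ S → monVec n i β t ∈ S := by
  have hbase : ∀ (β : ℕ → ℕ) (t : ℕ), (∑ j ∈ Finset.range (i - 1), β j = 0) →
      monVec n i (lastVec i (asum i β)) t ∈ S → monVec n i β t ∈ S := by
    intro β t hsum hmem
    have hz : ∀ j < i - 1, β j = 0 := by
      intro j hj
      exact Finset.sum_eq_zero_iff.mp hsum j (Finset.mem_range.mpr hj)
    have hasum : asum i β = β (i - 1) := by
      have hi' : i = (i - 1) + 1 := by omega
      rw [asum, hi', Finset.sum_range_succ]
      rw [show (i - 1 + 1 - 1) = i - 1 by omega] at *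
      omega
    have heq : monVec n i β t = monVec n i (lastVec i (asum i β)) t := by
      apply monVec_congr
      intro l hl
      by_cases hl' : l = i - 1
      · subst hl'; simp [lastVec, hasum]
      · rw [hz l (by omega)]; simp [lastVec, hl']
    rw [heq]; exact hmem
  intro K
  induction K with
  | zero =>
    intro β t hsum hmem
    exact hbase β t (Nat.le_zero.mp hsum) hmem
  | succ K ih =>
    intro β t hsum hmem
    by_cases h0 : ∑ j ∈ Finset.range (i - 1), β j = 0
    · exact hbase β t h0 hmem
    · -- pick a position j0 < i-1 with β j0 > 0
      have : ∃ j0 ∈ Finset.range (i - 1), β j0 ≠ 0 := by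
        by_contra hc
        push_neg at hc
        exact h0 (Finset.sum_eq_zero hc)
      obtain ⟨j0, hj0mem, hj0pos⟩ := this
      have hj0 : j0 < i - 1 := Finset.mem_range.mp hj0mem
      have hj0n : j0 < n := by omega
      have hi1n : i - 1 < n := by omega
      set β' : ℕ → ℕ := fun l => if l = j0 then β j0 - 1
        else if l = i - 1 then β (i - 1) + 1 else β l with hβ'
      -- sums
      have herase : β j0 + ∑ j ∈ (Finset.range (i - 1)).erase j0, β j
          = ∑ j ∈ Finset.range (i - 1), β j :=
        Finset.add_sum_erase _ β hj0mem
      have herase' : β' j0 + ∑ j ∈ (Finset.range (i - 1)).erase j0, β' j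
          = ∑ j ∈ Finset.range (i - 1), β' j :=
        Finset.add_sum_erase _ β' hj0mem
      have hsame : ∑ j ∈ (Finset.range (i - 1)).erase j0, β' j
          = ∑ j ∈ (Finset.range (i - 1)).erase j0, β j := by
        apply Finset.sum_congr rfl
        intro x hx
        have hx1 : x ≠ j0 := (Finset.mem_erase.mp hx).1
        have hx2 : x < i - 1 := Finset.mem_range.mp (Finset.mem_erase.mp hx).2
        simp only [hβ']
        rw [if_neg hx1, if_neg (by omega)]
      have hβ'j0 : β' j0 = β j0 - 1 := by simp [hβ']
      have hsum' : ∑ j ∈ Finset.range (i - 1), β' j ≤ K := by omega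
      have hasum' : asum i β' = asum i β := by
        have hi' : i = (i - 1) + 1 := by omega
        have h1 : asum i β' = (∑ j ∈ Finset.range (i - 1), β' j) + β' (i - 1) := by
          rw [asum, hi', Finset.sum_range_succ]
          congr 1 <;> rw [show (i - 1 + 1 - 1) = i - 1 by omega]
        have h2 : asum i β = (∑ j ∈ Finset.range (i - 1), β j) + β (i - 1) := by
          rw [asum, hi', Finset.sum_range_succ]
          congr 1 <;> rw [show (i - 1 + 1 - 1) = i - 1 by omega]
        have hβ'i : β' (i - 1) = β (i - 1) + 1 := by
          simp only [hβ']
          rw [if_neg (by omega : ¬ i - 1 = j0)]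
          simp
        omega
      have hmem' : monVec n i β' t ∈ S := by
        apply ih β' t hsum'
        rwa [hasum']
      -- one strong stability step
      have hpos : 0 < monVec n i β' t ⟨i - 1, hi1n⟩ := by
        simp only [monVec, Fin.val_mk, if_pos (show i - 1 < i by omega), hβ']
        rw [if_neg (by omega : ¬ i - 1 = j0)]
        simp
      have hlt : (⟨j0, hj0n⟩ : Fin n) < ⟨i - 1, hi1n⟩ := by
        simp [Fin.mk_lt_mk]; omega
      have hstep := hSS _ hmem' ⟨j0, hj0n⟩ ⟨i - 1, hi1n⟩ hlt hpos
      have hfin : (fun l : Fin n => if l = ⟨j0, hj0n⟩ then monVec n i β' t ⟨j0, hj0n⟩ + 1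
          else if l = ⟨i - 1, hi1n⟩ then monVec n i β' t ⟨i - 1, hi1n⟩ - 1
          else monVec n i β' t l) = monVec n i β t := by
        funext l
        have hv1 : monVec n i β' t ⟨j0, hj0n⟩ = β j0 - 1 := by
          simp only [monVec, Fin.val_mk, if_pos (show j0 < i by omega), hβ', if_pos rfl]
        have hv2 : monVec n i β' t ⟨i - 1, hi1n⟩ = β (i - 1) + 1 := by
          simp only [monVec, Fin.val_mk, if_pos (show i - 1 < i by omega), hβ']
          rw [if_neg (by omega : ¬ i - 1 = j0)]
          simp
        by_cases hl1 : l = (⟨j0, hj0n⟩ : Fin n)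
        · rw [if_pos hl1, hv1, hl1]
          simp only [monVec, Fin.val_mk, if_pos (show j0 < i by omega)]
          omega
        · rw [if_neg hl1]
          by_cases hl2 : l = (⟨i - 1, hi1n⟩ : Fin n)
          · rw [if_pos hl2, hv2, hl2]
            simp only [monVec, Fin.val_mk, if_pos (show i - 1 < i by omega)]
            omega
          · rw [if_neg hl2]
            have hne1 : (l : ℕ) ≠ j0 := fun h => hl1 (Fin.ext h)
            have hne2 : (l : ℕ) ≠ i - 1 := fun h => hl2 (Fin.ext h)
            simp [monVec, hβ', hne1, hne2]
      rwa [hfin] at hstep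

end Aux

/-- Lemma, part (2).  Let `J` be a strongly stable Artinian
monomial ideal in `k[x_1,…,x_n]` and `1 ≤ i ≤ n-1`.  If `α ∈ J_i`, then
`(0,…,0,|α|) ∈ J_i` and `f_{i+1}(α) ≤ f_{i+1}(0,…,0,|α|)`. -/
theorem lastVec_mem_JSet_and_fF_le
    {n : ℕ} (S : Set (Fin n → ℕ))
    (hIdeal : IsMonomialIdeal S) (hArt : IsArtinianMonomialSet S)
    (hSS : IsStronglyStable S)
    (i : ℕ) (hi1 : 1 ≤ i) (hin : i ≤ n - 1)
    (α : ℕ → ℕ) (hα : α ∈ JSet S i) :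
    lastVec i (asum i α) ∈ JSet S i ∧
      fF S i α ≤ fF S i (lastVec i (asum i α)) := by
  obtain ⟨hα0, hαlt⟩ := hα
  have hn2 : 2 ≤ n := by omega
  have hinn : i < n := by omega
  set s := asum i α with hs
  -- the monomial `x^α` is not in `S`
  have hmα : monVec n i α 0 ∉ S := by
    have h1 := hαlt (i - 1) (by omega)
    have h2 : monVec n (i - 1) α (α (i - 1)) ∉ S := by
      intro hmem
      have : fF S (i - 1) α ≤ α (i - 1) := Nat.sInf_le hmem
      omega
    have heq : monVec n i α 0 = monVec n (i - 1) α (α (i - 1)) := by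
      funext l
      by_cases h : (l : ℕ) = i - 1
      · simp [monVec, h, show i - 1 < i by omega]
      · simp only [monVec]
        split_ifs <;> omega
    rw [heq]; exact h2
  -- hence `x_i^{|α|}` is not in `S`
  have hxs : monVec n i (lastVec i s) 0 ∉ S := fun h =>
    hmα (moveDown hSS hi1 hinn _ α 0 le_rfl h)
  constructor
  · refine ⟨?_, ?_⟩
    · intro l hl
      simp [lastVec, show l ≠ i - 1 by omega]
    · intro j hj
      apply lt_fF hIdeal hArt (show j < n by omega)
      by_cases hji : j = i - 1
      · subst hji
        have hval : lastVec i s (i - 1) = s := by simp [lastVec]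
        rw [hval]
        have heq : monVec n (i - 1) (lastVec i s) s = monVec n i (lastVec i s) 0 := by
          funext l
          simp only [monVec, lastVec]
          split_ifs <;> omega
        rw [heq]; exact hxs
      · have hval : lastVec i s j = 0 := by simp [lastVec, hji]
        rw [hval]
        intro hmem
        have h0S : (0 : Fin n → ℕ) ∈ S := by
          have heq : monVec n j (lastVec i s) 0 = 0 := by
            funext l
            simp only [monVec, lastVec, Pi.zero_apply]
            split_ifs <;> omega
          rwa [heq] at hmem
        have := hIdeal 0 h0S (monVec n i α 0)
        rw [zero_add] at this
        exact hmα this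
  · have hmem : monVec n i (lastVec i s) (fF S i (lastVec i s)) ∈ S :=
      Nat.sInf_mem (fF_nonempty hArt hinn _)
    exact Nat.sInf_le (moveDown hSS hi1 hinn _ α _ le_rfl hmem)
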